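/- Let G be a finite triangle-free, (K_1+2K_2)-free, (K_1+C_5)-free, C_6-free graph that is point-incomparable (for any two distinct vertices u,v, neither N(u) ⊆ N(v) nor N(v) ⊆ N(u)). Let x,y be distinct non-adjacent vertices. If the graph G+xy obtained by adding edge xy is still triangle-free, then G+xy contains no induced 6-cycle and no induced copy of K_1+C_5. -/

import Mathlib

set_option maxRecDepth 8000

/-- The 6-cycle `C₆`. -/
def C6 : SimpleGraph (ZMod 6) :=
  SimpleGraph.fromRel (fun i j => j = i + 1)

/-- The graph `K₁ + 2K₂`: vertex 0 is isolated, with edges 1-2 and 3-4. -/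
def K1plus2K2 : SimpleGraph (Fin 5) :=
  SimpleGraph.fromRel (fun i j => (i = 1 ∧ j = 2) ∨ (i = 3 ∧ j = 4))

/-- The graph `K₁ + C₅`: vertex 0 is isolated and 1,2,3,4,5 form a 5-cycle. -/
def K1plusC5 : SimpleGraph (Fin 6) :=
  SimpleGraph.fromRel (fun i j =>
    (i = 1 ∧ j = 2) ∨ (i = 2 ∧ j = 3) ∨ (i = 3 ∧ j = 4) ∨ (i = 4 ∧ j = 5) ∨ (i = 5 ∧ j = 1))

instance : DecidableRel C6.Adj := fun a b =>
  decidable_of_iff' _ (SimpleGraph.fromRel_adj _ a b)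
instance : DecidableRel K1plus2K2.Adj := fun a b =>
  decidable_of_iff' _ (SimpleGraph.fromRel_adj _ a b)
instance : DecidableRel K1plusC5.Adj := fun a b =>
  decidable_of_iff' _ (SimpleGraph.fromRel_adj _ a b)

/-- A copy of `C6` on `Fin 6`, convenient for `fin_cases`/`Matrix` manipulations. -/
def C6F : SimpleGraph (Fin 6) :=
  SimpleGraph.fromRel (fun i j => j = i + 1)
instance : DecidableRel C6F.Adj := fun a b =>
  decidable_of_iff' _ (SimpleGraph.fromRel_adj _ a b)

def C6iso : C6 ≃g C6F where
  toFun := fun z => z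
  invFun := fun i => i
  left_inv := fun _ => rfl
  right_inv := fun _ => rfl
  map_rel_iff' := by decide

/-- From an induced `2K₂` (edges `p-q` and `r-s`) together with a vertex `z`
nonadjacent to all four of them, we get a contradiction with `K₁+2K₂`-freeness. -/
lemma P_lemma {V : Type*} (G : SimpleGraph V)
    (hK : ¬ Nonempty (K1plus2K2 ↪g G)) (z p q r s : V)
    (hpq : G.Adj p q) (hrs : G.Adj r s)
    (npr : ¬G.Adj p r) (nps : ¬G.Adj p s) (nqr : ¬G.Adj q r) (nqs : ¬G.Adj q s)
    (nzp : ¬G.Adj z p) (nzq : ¬G.Adj z q) (nzr : ¬G.Adj z r) (nzs : ¬G.Adj z s) :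
    False := by
  have sym : ∀ {u v : V}, ¬G.Adj u v → ¬G.Adj v u := fun h h2 => h h2.symm
  have hzp : z ≠ p := fun h => nzq (h ▸ hpq)
  have hzq : z ≠ q := fun h => nzp (h ▸ hpq.symm)
  have hzr : z ≠ r := fun h => nzs (h ▸ hrs)
  have hzs : z ≠ s := fun h => nzr (h ▸ hrs.symm)
  have hpr : p ≠ r := fun h => nqr ((h ▸ hpq).symm)
  have hps : p ≠ s := fun h => nqs ((h ▸ hpq).symm)
  have hqr : q ≠ r := fun h => npr (h ▸ hpq)
  have hqs : q ≠ s := fun h => nps (h ▸ hpq)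
  have hpq' : p ≠ q := hpq.ne
  have hrs' : r ≠ s := hrs.ne
  apply hK
  refine ⟨⟨⟨![z,p,q,r,s], ?_⟩, ?_⟩⟩
  · intro a b hab
    fin_cases a <;> fin_cases b <;> simp_all
  · intro a b
    show G.Adj (![z,p,q,r,s] a) (![z,p,q,r,s] b) ↔ _
    fin_cases a <;> fin_cases b <;>
      simp [K1plus2K2, SimpleGraph.fromRel_adj, G.irrefl, hpq, hrs, hpq.symm, hrs.symm,
        npr, nps, nqr, nqs, nzp, nzq, nzr, nzs, sym npr, sym nps, sym nqr, sym nqs,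
        sym nzp, sym nzq, sym nzr, sym nzs]

/-- An induced hexagon yields a contradiction with `C₆`-freeness. -/
lemma hex_lemma {V : Type*} (G : SimpleGraph V)
    (hC6 : ¬ Nonempty (C6 ↪g G)) (v0 v1 v2 v3 v4 v5 : V)
    (h01 : G.Adj v0 v1) (h12 : G.Adj v1 v2) (h23 : G.Adj v2 v3)
    (h34 : G.Adj v3 v4) (h45 : G.Adj v4 v5) (h50 : G.Adj v5 v0)
    (n02 : ¬G.Adj v0 v2) (n03 : ¬G.Adj v0 v3) (n04 : ¬G.Adj v0 v4)
    (n13 : ¬G.Adj v1 v3) (n14 : ¬G.Adj v1 v4) (n15 : ¬G.Adj v1 v5)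
    (n24 : ¬G.Adj v2 v4) (n25 : ¬G.Adj v2 v5) (n35 : ¬G.Adj v3 v5) :
    False := by
  have sym : ∀ {u v : V}, ¬G.Adj u v → ¬G.Adj v u := fun h h2 => h h2.symm
  have e02 : v0 ≠ v2 := fun h => n25 ((h ▸ h50).symm)
  have e03 : v0 ≠ v3 := fun h => n13 ((h ▸ h01).symm)
  have e04 : v0 ≠ v4 := fun h => n14 ((h ▸ h01).symm)
  have e13 : v1 ≠ v3 := fun h => n03 (h ▸ h01)
  have e14 : v1 ≠ v4 := fun h => n04 (h ▸ h01)
  have e15 : v1 ≠ v5 := fun h => n25 ((h ▸ h12).symm)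
  have e24 : v2 ≠ v4 := fun h => n14 (h ▸ h12)
  have e25 : v2 ≠ v5 := fun h => n15 (h ▸ h12)
  have e35 : v3 ≠ v5 := fun h => n25 (h ▸ h23)
  have e01 : v0 ≠ v1 := h01.ne
  have e12 : v1 ≠ v2 := h12.ne
  have e23 : v2 ≠ v3 := h23.ne
  have e34 : v3 ≠ v4 := h34.ne
  have e45 : v4 ≠ v5 := h45.ne
  have e50 : v5 ≠ v0 := h50.ne
  apply hC6
  have hv0 : ![v0,v1,v2,v3,v4,v5] 0 = v0 := rfl
  have hv1 : ![v0,v1,v2,v3,v4,v5] 1 = v1 := rfl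
  have hv2 : ![v0,v1,v2,v3,v4,v5] 2 = v2 := rfl
  have hv3 : ![v0,v1,v2,v3,v4,v5] 3 = v3 := rfl
  have hv4 : ![v0,v1,v2,v3,v4,v5] 4 = v4 := rfl
  have hv5 : ![v0,v1,v2,v3,v4,v5] 5 = v5 := rfl
  have hv5' : ![v0,v1,v2,v3,v4,v5] (⟨5, by omega⟩ : Fin 6) = v5 := rfl
  have embF : C6F ↪g G := by
    refine ⟨⟨![v0,v1,v2,v3,v4,v5], ?_⟩, ?_⟩
    · intro a b hab
      fin_cases a <;> fin_cases b <;>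
        simp only [hv0, hv1, hv2, hv3, hv4, hv5, hv5'] at hab <;>
        first | rfl | (exfalso; revert hab; assumption) |
          (exact absurd hab.symm (by assumption)) | (exact absurd hab (by assumption))
    · intro a b
      show G.Adj (![v0,v1,v2,v3,v4,v5] a) (![v0,v1,v2,v3,v4,v5] b) ↔ _
      fin_cases a <;> fin_cases b <;>
        simp [hv0, hv1, hv2, hv3, hv4, hv5, hv5', C6F, SimpleGraph.fromRel_adj, G.irrefl, h01, h12, h23, h34, h45, h50,
          h01.symm, h12.symm, h23.symm, h34.symm, h45.symm, h50.symm,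
          n02, n03, n04, n13, n14, n15, n24, n25, n35,
          sym n02, sym n03, sym n04, sym n13, sym n14, sym n15, sym n24, sym n25, sym n35]
  exact ⟨embF.comp C6iso.toEmbedding⟩

/-- The key lemma: an induced `P₆` from `x` to `y` in `G`, where `x` and `y` have no
common neighbour, contradicts the hypotheses on `G`. -/
lemma path_lemma {V : Type*} (G : SimpleGraph V)
    (hK3 : G.CliqueFree 3)
    (hK1plus2K2 : ¬ Nonempty (K1plus2K2 ↪g G))
    (hC6 : ¬ Nonempty (C6 ↪g G))
    (hpi : ∀ u v : V, u ≠ v → ¬ (G.neighborSet u ⊆ G.neighborSet v))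
    (x y a b c d : V)
    (nocmn : ∀ w, G.Adj x w → G.Adj y w → False)
    (exa : G.Adj x a) (eab : G.Adj a b) (ebc : G.Adj b c) (ecd : G.Adj c d)
    (edy : G.Adj d y)
    (nxb : ¬G.Adj x b) (nxc : ¬G.Adj x c) (nxd : ¬G.Adj x d) (nxy : ¬G.Adj x y)
    (nac : ¬G.Adj a c) (nad : ¬G.Adj a d) (nay : ¬G.Adj a y)
    (nbd : ¬G.Adj b d) (nby : ¬G.Adj b y) (ncy : ¬G.Adj c y) : False := by
  classical
  have tri : ∀ {p q r : V}, G.Adj p q → G.Adj p r → G.Adj q r → False := fun h1 h2 h3 =>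
    hK3 _ (SimpleGraph.is3Clique_triple_iff.mpr ⟨h1, h2, h3⟩)
  have hxb : x ≠ b := fun h => nxc (h ▸ ebc)
  obtain ⟨u, hux, hub⟩ := Set.not_subset.mp (hpi x b hxb)
  rw [SimpleGraph.mem_neighborSet] at hux
  have hub' : ¬G.Adj b u := fun h => hub (SimpleGraph.mem_neighborSet _ _ _ |>.mpr h)
  have hau : ¬G.Adj a u := fun h => tri exa hux h
  have huy : ¬G.Adj y u := fun h => nocmn u hux h
  have hud : G.Adj d u := by
    by_contra hnd
    exact P_lemma G hK1plus2K2 u a b d y eab edy nad nay nbd nby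
      (fun h => hau h.symm) (fun h => hub' h.symm) (fun h => hnd h.symm)
      (fun h => huy h.symm)
  have huc : ¬G.Adj u c := fun h => tri h hud.symm ecd
  exact hex_lemma G hC6 x a b c d u exa eab ebc ecd hud hux.symm
    nxb nxc nxd nac nad hau nbd hub' (fun h => huc h.symm)

theorem addEdge_C6_K1plusC5_free {V : Type*} [Fintype V] (G : SimpleGraph V)
    (hK3 : G.CliqueFree 3)
    (hK1plus2K2 : ¬ Nonempty (K1plus2K2 ↪g G))
    (hK1plusC5 : ¬ Nonempty (K1plusC5 ↪g G))
    (hC6 : ¬ Nonempty (C6 ↪g G))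
    (hpi : ∀ u v : V, u ≠ v → ¬ (G.neighborSet u ⊆ G.neighborSet v))
    (x y : V) (hxy : x ≠ y) (hnadj : ¬ G.Adj x y)
    (htf : (G ⊔ SimpleGraph.fromEdgeSet {s(x, y)}).CliqueFree 3) :
    (¬ Nonempty (C6 ↪g (G ⊔ SimpleGraph.fromEdgeSet {s(x, y)}))) ∧
    (¬ Nonempty (K1plusC5 ↪g (G ⊔ SimpleGraph.fromEdgeSet {s(x, y)}))) := by
  classical
  have hGle : ∀ {p q : V}, G.Adj p q → (G ⊔ SimpleGraph.fromEdgeSet {s(x, y)}).Adj p q := fun h => (SimpleGraph.sup_adj _ _ _ _).mpr (Or.inl h)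
  have hxyadj : (G ⊔ SimpleGraph.fromEdgeSet {s(x, y)}).Adj x y := (SimpleGraph.sup_adj _ _ _ _).mpr (Or.inr (by
    simp [SimpleGraph.fromEdgeSet_adj, hxy]))
  have nocommon : ∀ w, G.Adj x w → G.Adj y w → False := fun w h1 h2 =>
    htf {x, y, w} (SimpleGraph.is3Clique_triple_iff.mpr ⟨hxyadj, hGle h1, hGle h2⟩)
  have hsplit : ∀ {p q : V}, (G ⊔ SimpleGraph.fromEdgeSet {s(x, y)}).Adj p q →
      G.Adj p q ∨ (p = x ∧ q = y) ∨ (p = y ∧ q = x) := by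
    intro p q h
    rcases (SimpleGraph.sup_adj _ _ _ _).mp h with h | h
    · exact Or.inl h
    · rw [SimpleGraph.fromEdgeSet_adj] at h
      obtain ⟨hmem, -⟩ := h
      simp only [Set.mem_singleton_iff, Sym2.eq_iff] at hmem
      exact Or.inr hmem
  constructor
  · rintro ⟨e⟩
    by_cases hexi : ∃ i j : ZMod 6, C6.Adj i j ∧ e i = x ∧ e j = y
    · obtain ⟨i, j, hij, hx', hy'⟩ := hexi
      have hnadjE : ¬G.Adj (e i) (e j) := by rw [hx', hy']; exact hnadj
      have nocommonE : ∀ w, G.Adj (e i) w → G.Adj (e j) w → False := by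
        rw [hx', hy']; exact nocommon
      have hEx : ∀ p q : ZMod 6, C6.Adj p q → ¬(p = i ∧ q = j) → ¬(p = j ∧ q = i) →
          G.Adj (e p) (e q) := by
        intro p q ha h1 h2
        rcases hsplit (e.map_rel_iff.mpr ha) with h | ⟨ha1, ha2⟩ | ⟨ha1, ha2⟩
        · exact h
        · exact absurd ⟨e.injective (ha1.trans hx'.symm), e.injective (ha2.trans hy'.symm)⟩ h1
        · exact absurd ⟨e.injective (ha1.trans hy'.symm), e.injective (ha2.trans hx'.symm)⟩ h2
      have hnE : ∀ p q : ZMod 6, ¬C6.Adj p q → ¬G.Adj (e p) (e q) := fun p q hn h =>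
        hn (e.map_rel_iff.mp (hGle h))
      have hd : j = i + 1 ∨ i = j + 1 :=
        ((by simpa [C6, SimpleGraph.fromRel_adj] using hij : i ≠ j ∧ (j = i + 1 ∨ i = j + 1))).2
      rcases hd with rfl | rfl
      · exact path_lemma G hK3 hK1plus2K2 hC6 hpi (e i) (e (i+1)) (e (i+5)) (e (i+4))
          (e (i+3)) (e (i+2)) nocommonE
          (hEx i (i+5) ((by decide : ∀ t : ZMod 6, C6.Adj t (t+5)) i)
            ((by decide : ∀ t : ZMod 6, ¬(t = t ∧ t+5 = t+1)) i)
            ((by decide : ∀ t : ZMod 6, ¬(t = t+1 ∧ t+5 = t)) i))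
          (hEx (i+5) (i+4) ((by decide : ∀ t : ZMod 6, C6.Adj (t+5) (t+4)) i)
            ((by decide : ∀ t : ZMod 6, ¬(t+5 = t ∧ t+4 = t+1)) i)
            ((by decide : ∀ t : ZMod 6, ¬(t+5 = t+1 ∧ t+4 = t)) i))
          (hEx (i+4) (i+3) ((by decide : ∀ t : ZMod 6, C6.Adj (t+4) (t+3)) i)
            ((by decide : ∀ t : ZMod 6, ¬(t+4 = t ∧ t+3 = t+1)) i)
            ((by decide : ∀ t : ZMod 6, ¬(t+4 = t+1 ∧ t+3 = t)) i))
          (hEx (i+3) (i+2) ((by decide : ∀ t : ZMod 6, C6.Adj (t+3) (t+2)) i)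
            ((by decide : ∀ t : ZMod 6, ¬(t+3 = t ∧ t+2 = t+1)) i)
            ((by decide : ∀ t : ZMod 6, ¬(t+3 = t+1 ∧ t+2 = t)) i))
          (hEx (i+2) (i+1) ((by decide : ∀ t : ZMod 6, C6.Adj (t+2) (t+1)) i)
            ((by decide : ∀ t : ZMod 6, ¬(t+2 = t ∧ t+1 = t+1)) i)
            ((by decide : ∀ t : ZMod 6, ¬(t+2 = t+1 ∧ t+1 = t)) i))
          (hnE i (i+4) ((by decide : ∀ t : ZMod 6, ¬C6.Adj t (t+4)) i))
          (hnE i (i+3) ((by decide : ∀ t : ZMod 6, ¬C6.Adj t (t+3)) i))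
          (hnE i (i+2) ((by decide : ∀ t : ZMod 6, ¬C6.Adj t (t+2)) i))
          hnadjE
          (hnE (i+5) (i+3) ((by decide : ∀ t : ZMod 6, ¬C6.Adj (t+5) (t+3)) i))
          (hnE (i+5) (i+2) ((by decide : ∀ t : ZMod 6, ¬C6.Adj (t+5) (t+2)) i))
          (hnE (i+5) (i+1) ((by decide : ∀ t : ZMod 6, ¬C6.Adj (t+5) (t+1)) i))
          (hnE (i+4) (i+2) ((by decide : ∀ t : ZMod 6, ¬C6.Adj (t+4) (t+2)) i))
          (hnE (i+4) (i+1) ((by decide : ∀ t : ZMod 6, ¬C6.Adj (t+4) (t+1)) i))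
          (hnE (i+3) (i+1) ((by decide : ∀ t : ZMod 6, ¬C6.Adj (t+3) (t+1)) i))
      · exact path_lemma G hK3 hK1plus2K2 hC6 hpi (e (j+1)) (e j) (e (j+2)) (e (j+3))
          (e (j+4)) (e (j+5)) nocommonE
          (hEx (j+1) (j+2) ((by decide : ∀ t : ZMod 6, C6.Adj (t+1) (t+2)) j)
            ((by decide : ∀ t : ZMod 6, ¬(t+1 = t+1 ∧ t+2 = t)) j)
            ((by decide : ∀ t : ZMod 6, ¬(t+1 = t ∧ t+2 = t+1)) j))
          (hEx (j+2) (j+3) ((by decide : ∀ t : ZMod 6, C6.Adj (t+2) (t+3)) j)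
            ((by decide : ∀ t : ZMod 6, ¬(t+2 = t+1 ∧ t+3 = t)) j)
            ((by decide : ∀ t : ZMod 6, ¬(t+2 = t ∧ t+3 = t+1)) j))
          (hEx (j+3) (j+4) ((by decide : ∀ t : ZMod 6, C6.Adj (t+3) (t+4)) j)
            ((by decide : ∀ t : ZMod 6, ¬(t+3 = t+1 ∧ t+4 = t)) j)
            ((by decide : ∀ t : ZMod 6, ¬(t+3 = t ∧ t+4 = t+1)) j))
          (hEx (j+4) (j+5) ((by decide : ∀ t : ZMod 6, C6.Adj (t+4) (t+5)) j)
            ((by decide : ∀ t : ZMod 6, ¬(t+4 = t+1 ∧ t+5 = t)) j)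
            ((by decide : ∀ t : ZMod 6, ¬(t+4 = t ∧ t+5 = t+1)) j))
          (hEx (j+5) j ((by decide : ∀ t : ZMod 6, C6.Adj (t+5) t) j)
            ((by decide : ∀ t : ZMod 6, ¬(t+5 = t+1 ∧ t = t)) j)
            ((by decide : ∀ t : ZMod 6, ¬(t+5 = t ∧ t = t+1)) j))
          (hnE (j+1) (j+3) ((by decide : ∀ t : ZMod 6, ¬C6.Adj (t+1) (t+3)) j))
          (hnE (j+1) (j+4) ((by decide : ∀ t : ZMod 6, ¬C6.Adj (t+1) (t+4)) j))
          (hnE (j+1) (j+5) ((by decide : ∀ t : ZMod 6, ¬C6.Adj (t+1) (t+5)) j))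
          hnadjE
          (hnE (j+2) (j+4) ((by decide : ∀ t : ZMod 6, ¬C6.Adj (t+2) (t+4)) j))
          (hnE (j+2) (j+5) ((by decide : ∀ t : ZMod 6, ¬C6.Adj (t+2) (t+5)) j))
          (hnE (j+2) j ((by decide : ∀ t : ZMod 6, ¬C6.Adj (t+2) t) j))
          (hnE (j+3) (j+5) ((by decide : ∀ t : ZMod 6, ¬C6.Adj (t+3) (t+5)) j))
          (hnE (j+3) j ((by decide : ∀ t : ZMod 6, ¬C6.Adj (t+3) t) j))
          (hnE (j+4) j ((by decide : ∀ t : ZMod 6, ¬C6.Adj (t+4) t) j))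
    · apply hC6
      refine ⟨⟨e.toEmbedding, @fun a b => ?_⟩⟩
      constructor
      · intro h
        exact e.map_rel_iff.mp (hGle h)
      · intro ha
        rcases hsplit (e.map_rel_iff.mpr ha) with h | ⟨h1, h2⟩ | ⟨h1, h2⟩
        · exact h
        · exact absurd ⟨a, b, ha, h1, h2⟩ hexi
        · exact absurd ⟨b, a, ha.symm, h2, h1⟩ hexi
  · rintro ⟨e⟩
    by_cases hexi : ∃ i j : Fin 6, K1plusC5.Adj i j ∧ e i = x ∧ e j = y
    · obtain ⟨i, j, hij, hx', hy'⟩ := hexi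
      have hnadjE : ¬G.Adj (e i) (e j) := by rw [hx', hy']; exact hnadj
      have hEx : ∀ p q : Fin 6, K1plusC5.Adj p q → ¬(p = i ∧ q = j) → ¬(p = j ∧ q = i) →
          G.Adj (e p) (e q) := by
        intro p q ha h1 h2
        rcases hsplit (e.map_rel_iff.mpr ha) with h | ⟨ha1, ha2⟩ | ⟨ha1, ha2⟩
        · exact h
        · exact absurd ⟨e.injective (ha1.trans hx'.symm), e.injective (ha2.trans hy'.symm)⟩ h1
        · exact absurd ⟨e.injective (ha1.trans hy'.symm), e.injective (ha2.trans hx'.symm)⟩ h2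
      have hnE : ∀ p q : Fin 6, ¬K1plusC5.Adj p q → ¬G.Adj (e p) (e q) := fun p q hn h =>
        hn (e.map_rel_iff.mp (hGle h))
      have hd := (by decide : ∀ p q : Fin 6, K1plusC5.Adj p q →
        ((p=1∧q=2) ∨ (p=2∧q=1) ∨ (p=2∧q=3) ∨ (p=3∧q=2) ∨ (p=3∧q=4) ∨ (p=4∧q=3) ∨
         (p=4∧q=5) ∨ (p=5∧q=4) ∨ (p=5∧q=1) ∨ (p=1∧q=5))) i j hij
      rcases hd with ⟨rfl,rfl⟩|⟨rfl,rfl⟩|⟨rfl,rfl⟩|⟨rfl,rfl⟩|⟨rfl,rfl⟩|⟨rfl,rfl⟩|⟨rfl,rfl⟩|⟨rfl,rfl⟩|⟨rfl,rfl⟩|⟨rfl,rfl⟩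
      · exact P_lemma G hK1plus2K2 (e 0) (e 2) (e 3) (e 5) (e 1)
          (hEx 2 3 (by decide) (by decide) (by decide))
          (hEx 5 1 (by decide) (by decide) (by decide))
          (hnE 2 5 (by decide)) (fun h => hnadjE h.symm)
          (hnE 3 5 (by decide)) (hnE 3 1 (by decide))
          (hnE 0 2 (by decide)) (hnE 0 3 (by decide)) (hnE 0 5 (by decide)) (hnE 0 1 (by decide))
      · exact P_lemma G hK1plus2K2 (e 0) (e 2) (e 3) (e 5) (e 1)
          (hEx 2 3 (by decide) (by decide) (by decide))
          (hEx 5 1 (by decide) (by decide) (by decide))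
          (hnE 2 5 (by decide)) hnadjE
          (hnE 3 5 (by decide)) (hnE 3 1 (by decide))
          (hnE 0 2 (by decide)) (hnE 0 3 (by decide)) (hnE 0 5 (by decide)) (hnE 0 1 (by decide))
      · exact P_lemma G hK1plus2K2 (e 0) (e 3) (e 4) (e 1) (e 2)
          (hEx 3 4 (by decide) (by decide) (by decide))
          (hEx 1 2 (by decide) (by decide) (by decide))
          (hnE 3 1 (by decide)) (fun h => hnadjE h.symm)
          (hnE 4 1 (by decide)) (hnE 4 2 (by decide))
          (hnE 0 3 (by decide)) (hnE 0 4 (by decide)) (hnE 0 1 (by decide)) (hnE 0 2 (by decide))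
      · exact P_lemma G hK1plus2K2 (e 0) (e 3) (e 4) (e 1) (e 2)
          (hEx 3 4 (by decide) (by decide) (by decide))
          (hEx 1 2 (by decide) (by decide) (by decide))
          (hnE 3 1 (by decide)) hnadjE
          (hnE 4 1 (by decide)) (hnE 4 2 (by decide))
          (hnE 0 3 (by decide)) (hnE 0 4 (by decide)) (hnE 0 1 (by decide)) (hnE 0 2 (by decide))
      · exact P_lemma G hK1plus2K2 (e 0) (e 4) (e 5) (e 2) (e 3)
          (hEx 4 5 (by decide) (by decide) (by decide))
          (hEx 2 3 (by decide) (by decide) (by decide))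
          (hnE 4 2 (by decide)) (fun h => hnadjE h.symm)
          (hnE 5 2 (by decide)) (hnE 5 3 (by decide))
          (hnE 0 4 (by decide)) (hnE 0 5 (by decide)) (hnE 0 2 (by decide)) (hnE 0 3 (by decide))
      · exact P_lemma G hK1plus2K2 (e 0) (e 4) (e 5) (e 2) (e 3)
          (hEx 4 5 (by decide) (by decide) (by decide))
          (hEx 2 3 (by decide) (by decide) (by decide))
          (hnE 4 2 (by decide)) hnadjE
          (hnE 5 2 (by decide)) (hnE 5 3 (by decide))
          (hnE 0 4 (by decide)) (hnE 0 5 (by decide)) (hnE 0 2 (by decide)) (hnE 0 3 (by decide))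
      · exact P_lemma G hK1plus2K2 (e 0) (e 5) (e 1) (e 3) (e 4)
          (hEx 5 1 (by decide) (by decide) (by decide))
          (hEx 3 4 (by decide) (by decide) (by decide))
          (hnE 5 3 (by decide)) (fun h => hnadjE h.symm)
          (hnE 1 3 (by decide)) (hnE 1 4 (by decide))
          (hnE 0 5 (by decide)) (hnE 0 1 (by decide)) (hnE 0 3 (by decide)) (hnE 0 4 (by decide))
      · exact P_lemma G hK1plus2K2 (e 0) (e 5) (e 1) (e 3) (e 4)
          (hEx 5 1 (by decide) (by decide) (by decide))
          (hEx 3 4 (by decide) (by decide) (by decide))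
          (hnE 5 3 (by decide)) hnadjE
          (hnE 1 3 (by decide)) (hnE 1 4 (by decide))
          (hnE 0 5 (by decide)) (hnE 0 1 (by decide)) (hnE 0 3 (by decide)) (hnE 0 4 (by decide))
      · exact P_lemma G hK1plus2K2 (e 0) (e 1) (e 2) (e 4) (e 5)
          (hEx 1 2 (by decide) (by decide) (by decide))
          (hEx 4 5 (by decide) (by decide) (by decide))
          (hnE 1 4 (by decide)) (fun h => hnadjE h.symm)
          (hnE 2 4 (by decide)) (hnE 2 5 (by decide))
          (hnE 0 1 (by decide)) (hnE 0 2 (by decide)) (hnE 0 4 (by decide)) (hnE 0 5 (by decide))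
      · exact P_lemma G hK1plus2K2 (e 0) (e 1) (e 2) (e 4) (e 5)
          (hEx 1 2 (by decide) (by decide) (by decide))
          (hEx 4 5 (by decide) (by decide) (by decide))
          (hnE 1 4 (by decide)) hnadjE
          (hnE 2 4 (by decide)) (hnE 2 5 (by decide))
          (hnE 0 1 (by decide)) (hnE 0 2 (by decide)) (hnE 0 4 (by decide)) (hnE 0 5 (by decide))
    · apply hK1plusC5
      refine ⟨⟨e.toEmbedding, @fun a b => ?_⟩⟩
      constructor
      · intro h
        exact e.map_rel_iff.mp (hGle h)
      · intro ha
        rcases hsplit (e.map_rel_iff.mpr ha) with h | ⟨h1, h2⟩ | ⟨h1, h2⟩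
        · exact h
        · exact absurd ⟨a, b, ha, h1, h2⟩ hexi
        · exact absurd ⟨b, a, ha.symm, h2, h1⟩ hexi
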